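/- Suppose f : [0, ∞) → [0, ∞) is s-convex in the second sense for some fixed s ∈ (0, 1), and let a, b ∈ [0, ∞) with a < b. If f is integrable on [a, b], then: 2^{s−1} f((a+b)/2) ≤ (1/(b−a)) ∫_a^b f(x) dx ≤ (f(a) + f(b))/(s+1). -/

import Mathlib

open MeasureTheory Set

/-- Riemann–Liouville left fractional integral `J_{a+}^α f (x)`. -/
noncomputable def RLleft (α a : ℝ) (f : ℝ → ℝ) (x : ℝ) : ℝ :=
  (1 / Real.Gamma α) * ∫ t in a..x, (x - t) ^ (α - 1) * f t

/-- Riemann–Liouville right fractional integral `J_{b-}^α f (x)`. -/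
noncomputable def RLright (α b : ℝ) (f : ℝ → ℝ) (x : ℝ) : ℝ :=
  (1 / Real.Gamma α) * ∫ t in x..b, (t - x) ^ (α - 1) * f t

/-- `g` is `s`-convex in the second sense on `D`. -/
def SConvexOn (s : ℝ) (D : Set ℝ) (g : ℝ → ℝ) : Prop :=
  ∀ x ∈ D, ∀ y ∈ D, ∀ t ∈ Set.Icc (0:ℝ) 1,
    g (t * x + (1 - t) * y) ≤ t ^ s * g x + (1 - t) ^ s * g y

/-- `g` is `s`-concave in the second sense on `D`. -/
def SConcaveOn (s : ℝ) (D : Set ℝ) (g : ℝ → ℝ) : Prop :=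
  ∀ x ∈ D, ∀ y ∈ D, ∀ t ∈ Set.Icc (0:ℝ) 1,
    t ^ s * g x + (1 - t) ^ s * g y ≤ g (t * x + (1 - t) * y)

/-- Incomplete Beta function `β(x; p, q) = ∫₀ˣ t^(p-1) (1-t)^(q-1) dt`. -/
noncomputable def incBeta (x p q : ℝ) : ℝ :=
  ∫ t in (0:ℝ)..x, t ^ (p - 1) * (1 - t) ^ (q - 1)

theorem hadamard_sconvex
    (f : ℝ → ℝ) (s a b : ℝ) (hs : s ∈ Set.Ioo (0:ℝ) 1)
    (hmap : ∀ x, 0 ≤ x → 0 ≤ f x)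
    (hconv : SConvexOn s (Set.Ici (0:ℝ)) f)
    (ha : 0 ≤ a) (hab : a < b)
    (hint : IntervalIntegrable f volume a b) :
    2 ^ (s - 1) * f ((a + b)/2) ≤ (1 / (b - a)) * ∫ x in a..b, f x ∧
      (1 / (b - a)) * ∫ x in a..b, f x ≤ (f a + f b) / (s + 1) := by
  have hb : 0 ≤ b := le_trans ha hab.le
  have hba : (0:ℝ) < b - a := by linarith
  have hc : a - b ≠ 0 := by linarith
  have hc' : b - a ≠ 0 := hba.ne'
  -- membership of convex combinations
  have hmem : ∀ t ∈ Set.Icc (0:ℝ) 1, t * a + (1 - t) * b ∈ Set.Ici (0:ℝ) := by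
    intro t ht
    have := ht.1; have := ht.2
    have : 0 ≤ t * a + (1 - t) * b := by nlinarith
    exact this
  have hmem' : ∀ t ∈ Set.Icc (0:ℝ) 1, (1 - t) * a + t * b ∈ Set.Ici (0:ℝ) := by
    intro t ht
    have h' : 1 - t ∈ Set.Icc (0:ℝ) 1 := ⟨by linarith [ht.2], by linarith [ht.1]⟩
    simpa using hmem (1 - t) h'
  -- integrability of f composed with affine maps
  have hg1 : IntervalIntegrable (fun t => f (t * a + (1 - t) * b)) volume 0 1 := by
    have h1 := (hint.comp_add_right b).comp_mul_left (c := a - b)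
    have : IntervalIntegrable (fun t => f ((a - b) * t + b)) volume 0 1 := by
      have e1 : (a - b) / (a - b) = (1:ℝ) := div_self hc
      have e2 : (b - b) / (a - b) = (0:ℝ) := by simp
      rw [e1, e2] at h1
      exact h1.symm
    convert this using 2 with t
    ring_nf
  have hg2 : IntervalIntegrable (fun t => f ((1 - t) * a + t * b)) volume 0 1 := by
    have h1 := (hint.comp_add_right a).comp_mul_left (c := b - a)
    have : IntervalIntegrable (fun t => f ((b - a) * t + a)) volume 0 1 := by
      have e1 : (a - a) / (b - a) = (0:ℝ) := by simp
      have e2 : (b - a) / (b - a) = (1:ℝ) := div_self hc'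
      rw [e1, e2] at h1
      exact h1
    convert this using 2 with t
    ring_nf
  -- value of the transformed integrals
  have hI1 : (∫ t in (0:ℝ)..1, f (t * a + (1 - t) * b)) = (1 / (b - a)) * ∫ x in a..b, f x := by
    have h := intervalIntegral.integral_comp_mul_add f hc b (a := 0) (b := 1)
    have e : (fun t : ℝ => f (t * a + (1 - t) * b)) = fun t => f ((a - b) * t + b) := by
      funext t; ring_nf
    rw [e, h]
    simp only [mul_zero, zero_add, mul_one, smul_eq_mul]
    have e3 : (a - b) * 1 + b = a := by ring
    have e4 : a - b + b = a := by ring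
    rw [e4, intervalIntegral.integral_symm a b]
    field_simp
    ring
  have hI2 : (∫ t in (0:ℝ)..1, f ((1 - t) * a + t * b)) = (1 / (b - a)) * ∫ x in a..b, f x := by
    have h := intervalIntegral.integral_comp_mul_add f hc' a (a := 0) (b := 1)
    have e : (fun t : ℝ => f ((1 - t) * a + t * b)) = fun t => f ((b - a) * t + a) := by
      funext t; ring_nf
    rw [e, h]
    simp only [mul_zero, zero_add, mul_one, smul_eq_mul]
    have : (b - a) + a = b := by ring
    rw [this]
    field_simp
  -- integrals of t^s and (1-t)^s
  have hspos : (0:ℝ) < s := hs.1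
  have hs1 : s + 1 ≠ 0 := by linarith
  have hts : (∫ t in (0:ℝ)..1, t ^ s) = 1 / (s + 1) := by
    rw [integral_rpow (Or.inl (by linarith))]
    rw [Real.one_rpow, Real.zero_rpow hs1]
    norm_num
  have h1ts : (∫ t in (0:ℝ)..1, (1 - t) ^ s) = 1 / (s + 1) := by
    have := intervalIntegral.integral_comp_sub_left (fun x : ℝ => x ^ s) 1 (a := 0) (b := 1)
    simp only [sub_zero, sub_self] at this
    rw [this, integral_rpow (Or.inl (by linarith))]
    rw [Real.one_rpow, Real.zero_rpow hs1]
    norm_num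
  have hintt : IntervalIntegrable (fun t : ℝ => t ^ s) volume 0 1 :=
    intervalIntegral.intervalIntegrable_rpow (Or.inl hspos.le)
  have hint1t : IntervalIntegrable (fun t : ℝ => (1 - t) ^ s) volume 0 1 := by
    have := (hintt.comp_sub_left 1).symm
    simpa using this
  constructor
  · -- left inequality
    have key : ∀ t ∈ Set.Icc (0:ℝ) 1,
        f ((a + b) / 2) ≤ (1/2 : ℝ) ^ s * f (t * a + (1 - t) * b)
          + (1/2 : ℝ) ^ s * f ((1 - t) * a + t * b) := by
      intro t ht
      have h := hconv _ (hmem t ht) _ (hmem' t ht) (1/2) (by norm_num)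
      have e : (1/2 : ℝ) * (t * a + (1 - t) * b) + (1 - 1/2) * ((1 - t) * a + t * b)
          = (a + b) / 2 := by ring
      rw [e] at h
      have e2 : (1 - 1/2 : ℝ) = 1/2 := by norm_num
      rw [e2] at h
      exact h
    have hmono : (∫ t in (0:ℝ)..1, f ((a + b) / 2))
        ≤ ∫ t in (0:ℝ)..1, ((1/2 : ℝ) ^ s * f (t * a + (1 - t) * b)
          + (1/2 : ℝ) ^ s * f ((1 - t) * a + t * b)) := by
      apply intervalIntegral.integral_mono_on (by norm_num)
      · exact intervalIntegrable_const
      · exact ((hg1.const_mul _).add (hg2.const_mul _))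
      · exact key
    rw [intervalIntegral.integral_const] at hmono
    rw [intervalIntegral.integral_add (hg1.const_mul _) (hg2.const_mul _)] at hmono
    rw [intervalIntegral.integral_const_mul, intervalIntegral.integral_const_mul,
      hI1, hI2] at hmono
    simp only [sub_zero, one_smul, smul_eq_mul] at hmono
    set A := (1 / (b - a)) * ∫ x in a..b, f x with hA
    have h2 : f ((a + b) / 2) ≤ 2 * ((1/2 : ℝ) ^ s) * A := by linarith
    have hpow : (2:ℝ) ^ (s - 1) * (2 * ((1/2 : ℝ) ^ s)) = 1 := by
      have h2s : ((1/2 : ℝ)) ^ s = 2 ^ (-s) := by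
        rw [one_div, Real.inv_rpow (by norm_num : (0:ℝ) ≤ 2), ← Real.rpow_neg (by norm_num)]
      rw [h2s]
      have : (2:ℝ) ^ (s - 1) * 2 ^ (-s) = 2 ^ ((s - 1) + (-s)) :=
        (Real.rpow_add (by norm_num) _ _).symm
      calc (2:ℝ) ^ (s - 1) * (2 * 2 ^ (-s)) = 2 * ((2:ℝ) ^ (s - 1) * 2 ^ (-s)) := by ring
        _ = 2 * 2 ^ ((s - 1) + (-s)) := by rw [this]
        _ = 1 := by
            have : (s - 1) + (-s) = -1 := by ring
            rw [this, Real.rpow_neg_one]; norm_num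
    have hpos : (0:ℝ) < 2 ^ (s - 1) := Real.rpow_pos_of_pos (by norm_num) _
    calc (2:ℝ) ^ (s - 1) * f ((a + b) / 2)
        ≤ 2 ^ (s - 1) * (2 * ((1/2 : ℝ) ^ s) * A) := by
          exact mul_le_mul_of_nonneg_left h2 hpos.le
      _ = (2 ^ (s - 1) * (2 * ((1/2 : ℝ) ^ s))) * A := by ring
      _ = A := by rw [hpow, one_mul]
  · -- right inequality
    have key : ∀ t ∈ Set.Icc (0:ℝ) 1,
        f (t * a + (1 - t) * b) ≤ t ^ s * f a + (1 - t) ^ s * f b := by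
      intro t ht
      exact hconv a ha b hb t ht
    have hmono : (∫ t in (0:ℝ)..1, f (t * a + (1 - t) * b))
        ≤ ∫ t in (0:ℝ)..1, (t ^ s * f a + (1 - t) ^ s * f b) := by
      apply intervalIntegral.integral_mono_on (by norm_num) hg1
      · exact ((hintt.mul_const _).add (hint1t.mul_const _))
      · exact key
    rw [hI1] at hmono
    rw [intervalIntegral.integral_add (hintt.mul_const _) (hint1t.mul_const _)] at hmono
    rw [intervalIntegral.integral_mul_const, intervalIntegral.integral_mul_const,
      hts, h1ts] at hmono
    calc (1 / (b - a)) * ∫ x in a..b, f x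
        ≤ 1 / (s + 1) * f a + 1 / (s + 1) * f b := hmono
      _ = (f a + f b) / (s + 1) := by ring
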